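/- Let T be a finite tree with root r and edge costs c : E(T) → ℕ. Let v ≠ r have parent w, let e₀ = {v,w}, let S_v be the subtree of v with ℓ = |S_v|, and let E_v be the set of edges of T with both endpoints in S_v. For A ⊆ E_v ∪ {e₀} define gain(A) = |{x ∈ S_v : the unique path from x to w contains an edge of A}|, and for A' ⊆ E_v define gain'(A') = |{x ∈ S_v, x ≠ v : the unique path from x to v contains an edge of A'}|. Then: (i) the minimum of Σ_{a∈A} c(a) over all A ⊆ E_v ∪ {e₀} with gain(A) ≥ ℓ equals c(e₀); and (ii) for every j with 0 ≤ j ≤ ℓ−1, the minimum of Σ_{a∈A} c(a) over all A ⊆ E_v ∪ {e₀} with gain(A) ≥ j equals the minimum of c(e₀) and the minimum of Σ_{a∈A'} c(a) over all A' ⊆ E_v with gain'(A') ≥ j. (Correctness of the step 'computing A_v given B_v' in the dynamic program of Lemma 1.) -/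

import Mathlib

open SimpleGraph

section helpers

variable {V : Type*} {G : SimpleGraph V} (hT : G.IsTree) {v w r : V}

include hT

/-- In a tree, any path between adjacent vertices is the single edge; in particular
its edge list is `[s(v,w)]`. -/
lemma edges_of_path_adj (hadj : G.Adj v w) (p : G.Walk v w) (hp : p.IsPath) :
    p.edges = [s(v, w)] := by
  have h1 := (hT.existsUnique_path v w).unique hp
      ((Path.singleton hadj).2)
  have : (Path.singleton hadj : G.Walk v w) = Walk.cons hadj Walk.nil := rfl
  rw [h1, this]
  simp

/-- There is a path from the parent `w` to the root avoiding `v`. -/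
lemma exists_path_avoid (hadj : G.Adj v w)
    (hparent : ∀ q : G.Path v r, w ∈ q.1.support) :
    ∃ q : G.Walk w r, q.IsPath ∧ v ∉ q.support := by
  classical
  obtain ⟨p0⟩ := hT.isConnected.preconnected v r
  set P : G.Path v r := p0.toPath with hP
  have hw : w ∈ P.1.support := hparent P
  refine ⟨P.1.dropUntil w hw, P.2.dropUntil hw, ?_⟩
  intro hv
  have hspec := P.1.take_spec hw
  have hnd : P.1.support.Nodup := P.2.2
  rw [← hspec, Walk.support_append] at hnd
  have hdisj := List.disjoint_of_nodup_append hnd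
  have hv1 : v ∈ (P.1.takeUntil w hw).support := Walk.start_mem_support _
  rw [Walk.support_eq_cons] at hv
  rcases List.mem_cons.mp hv with h | h
  · exact hadj.ne h
  · exact hdisj hv1 h

/-- If every path from `x` to `r` passes through `v`, then every path from `x` to the
parent `w` passes through `v`. -/
lemma mem_support_of_path_to_parent (hadj : G.Adj v w)
    (hparent : ∀ q : G.Path v r, w ∈ q.1.support) {x : V}
    (hx : ∀ p : G.Path x r, v ∈ p.1.support)
    (p : G.Walk x w) (hp : p.IsPath) : v ∈ p.support := by
  classical
  obtain ⟨q, hq, hqv⟩ := exists_path_avoid hT hadj hparent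
  have hm : v ∈ (p.append q).toPath.1.support := hx _
  have hm2 : v ∈ (p.append q).support :=
    Walk.support_bypass_subset _ hm
  rw [Walk.support_append] at hm2
  rcases List.mem_append.mp hm2 with h | h
  · exact h
  · exact absurd (List.mem_of_mem_tail h) hqv

/-- Every path from `x ∈ S_v` to the parent `w` uses the edge `s(v,w)`. -/
lemma edge_mem_of_path_to_parent (hadj : G.Adj v w)
    (hparent : ∀ q : G.Path v r, w ∈ q.1.support) {x : V}
    (hx : ∀ p : G.Path x r, v ∈ p.1.support)
    (p : G.Walk x w) (hp : p.IsPath) : s(v, w) ∈ p.edges := by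
  classical
  have hv : v ∈ p.support := mem_support_of_path_to_parent hT hadj hparent hx p hp
  have hd : (p.dropUntil v hv).IsPath := hp.dropUntil hv
  have := edges_of_path_adj hT hadj _ hd
  exact Walk.edges_dropUntil_subset p hv (this ▸ List.mem_singleton_self _)

/-- If `A` misses the parent edge but cuts every path from `x` to `w`, then it cuts
every path from `x` to `v`. -/
lemma cut_to_v_of_cut_to_w (hadj : G.Adj v w) {x : V} {A : Finset (Sym2 V)}
    (hA : s(v, w) ∉ A)
    (hcut : ∀ p : G.Path x w, ∃ a ∈ A, a ∈ p.1.edges)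
    (q : G.Walk x v) (hq : q.IsPath) : ∃ a ∈ A, a ∈ q.edges := by
  classical
  by_cases hw : w ∈ q.support
  · obtain ⟨a, haA, hae⟩ := hcut ⟨q.takeUntil w hw, hq.takeUntil hw⟩
    exact ⟨a, haA, Walk.edges_takeUntil_subset q hw hae⟩
  · have hcp : (q.concat hadj).IsPath := by
      rw [Walk.isPath_def, Walk.support_concat,
        List.nodup_append]
      exact ⟨hq.2, List.nodup_singleton _, by
        intro a ha b hb; rw [List.mem_singleton] at hb; subst hb; exact fun h => hw (h ▸ ha)⟩
    obtain ⟨a, haA, hae⟩ := hcut ⟨q.concat hadj, hcp⟩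
    rw [Walk.edges_concat, List.concat_eq_append] at hae
    rcases List.mem_append.mp hae with h | h
    · exact ⟨a, haA, h⟩
    · exact absurd ((List.mem_singleton.mp h) ▸ haA) hA

end helpers
open Classical in
/-- Correctness of the step "computing `A_v` given `B_v`" in the dynamic program of
Lemma 1.  In a finite rooted tree with edge costs, for a non-root vertex `v` with parent
`w` and connecting edge `e₀ = {v, w}`, with `S_v` the subtree of `v` (of size `ℓ`) and
`E_v` the edges inside `S_v`:
(i) the minimum cost of a set `A ⊆ E_v ∪ {e₀}` separating all `ℓ` vertices of `S_v`
from `w` is `c(e₀)`; and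
(ii) for each `0 ≤ j ≤ ℓ - 1`, the minimum cost of a set `A ⊆ E_v ∪ {e₀}` of gain at
least `j` is the minimum of `c(e₀)` and the minimum cost of a set `A' ⊆ E_v` of gain
(within the subtree, towards `v`) at least `j`. -/
theorem lemma_one_A_from_B_step
    {V : Type*} [Fintype V] (G : SimpleGraph V) (hT : G.IsTree)
    (r : V) (c : Sym2 V → ℕ)
    (v w : V) (hvr : v ≠ r) (hadj : G.Adj v w)
    (hparent : ∀ q : G.Path v r, w ∈ q.1.support) :
    ∀ (e₀ : Sym2 V), e₀ = s(v, w) →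
    ∀ (Sv : Finset V),
      Sv = Finset.univ.filter (fun x => ∀ p : G.Path x r, v ∈ p.1.support) →
    ∀ (ℓ : ℕ), ℓ = Sv.card →
    ∀ (Ev : Finset (Sym2 V)),
      Ev = G.edgeFinset.filter (fun e => ∀ u ∈ e, u ∈ Sv) →
    ∀ (gain gain' : Finset (Sym2 V) → ℕ),
      (∀ A, gain A =
        (Sv.filter (fun x => ∀ p : G.Path x w, ∃ a ∈ A, a ∈ p.1.edges)).card) →
      (∀ A', gain' A' =
        (Sv.filter (fun x => x ≠ v ∧ ∀ p : G.Path x v, ∃ a ∈ A', a ∈ p.1.edges)).card) →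
    (sInf {x : ℕ∞ | ∃ A ⊆ insert e₀ Ev, ℓ ≤ gain A ∧ x = ∑ a ∈ A, (c a : ℕ∞)}
        = (c e₀ : ℕ∞)) ∧
    (∀ j : ℕ, j ≤ ℓ - 1 →
      sInf {x : ℕ∞ | ∃ A ⊆ insert e₀ Ev, j ≤ gain A ∧ x = ∑ a ∈ A, (c a : ℕ∞)}
        = min (c e₀ : ℕ∞)
            (sInf {x : ℕ∞ | ∃ A' ⊆ Ev, j ≤ gain' A' ∧ x = ∑ a ∈ A', (c a : ℕ∞)})) := by
  classical
  intro e₀ he₀ Sv hSv ℓ hℓ Ev hEv gain gain' hgain hgain'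
  have hSv_mem : ∀ x : V, x ∈ Sv ↔ ∀ p : G.Path x r, v ∈ p.1.support := by
    intro x; rw [hSv]; simp
  have hvS : v ∈ Sv := (hSv_mem v).mpr fun p => p.1.start_mem_support
  -- the gain of `{e₀}` is `ℓ`
  have hgain_e0 : gain {e₀} = ℓ := by
    rw [hgain, hℓ]
    congr 1
    apply Finset.filter_true_of_mem
    intro x hx p
    exact ⟨e₀, Finset.mem_singleton_self _,
      he₀ ▸ edge_mem_of_path_to_parent hT hadj hparent ((hSv_mem x).mp hx) p.1 p.2⟩
  have hmem : ∀ j : ℕ, j ≤ ℓ →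
      (c e₀ : ℕ∞) ∈ {x : ℕ∞ | ∃ A ⊆ insert e₀ Ev, j ≤ gain A ∧
        x = ∑ a ∈ A, (c a : ℕ∞)} := by
    intro j hj
    exact ⟨{e₀}, Finset.singleton_subset_iff.mpr (Finset.mem_insert_self _ _),
      by rw [hgain_e0]; exact hj, by simp⟩
  constructor
  · apply le_antisymm
    · exact sInf_le (hmem ℓ le_rfl)
    · apply le_sInf
      rintro y ⟨A, hAsub, hAg, rfl⟩
      rw [hgain] at hAg
      have heq : Sv.filter (fun x => ∀ p : G.Path x w, ∃ a ∈ A, a ∈ p.1.edges) = Sv :=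
        Finset.eq_of_subset_of_card_le (Finset.filter_subset _ _) (hℓ ▸ hAg)
      have hvcut := (Finset.mem_filter.mp (heq ▸ hvS : v ∈ _)).2
      obtain ⟨a, haA, hae⟩ := hvcut (SimpleGraph.Path.singleton hadj)
      have ha : a = s(v, w) := by
        simpa [SimpleGraph.Path.singleton] using hae
      have he0A : e₀ ∈ A := by rw [he₀, ← ha]; exact haA
      exact Finset.single_le_sum (f := fun a => (c a : ℕ∞)) (fun i _ => zero_le) he0A
  · intro j hj
    apply le_antisymm
    · apply le_min
      · exact sInf_le (hmem j (le_trans hj (Nat.sub_le ℓ 1)))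
      · apply le_sInf
        rintro y ⟨A', hA'sub, hA'g, rfl⟩
        apply sInf_le
        refine ⟨A', hA'sub.trans (Finset.subset_insert _ _), ?_, rfl⟩
        refine le_trans hA'g ?_
        rw [hgain, hgain']
        apply Finset.card_le_card
        intro x hx
        obtain ⟨hxS, _, hcut⟩ := Finset.mem_filter.mp hx
        refine Finset.mem_filter.mpr ⟨hxS, fun p => ?_⟩
        have hv : v ∈ p.1.support :=
          mem_support_of_path_to_parent hT hadj hparent ((hSv_mem x).mp hxS) p.1 p.2
        obtain ⟨a, haA, hae⟩ := hcut ⟨p.1.takeUntil v hv, p.2.takeUntil hv⟩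
        exact ⟨a, haA, SimpleGraph.Walk.edges_takeUntil_subset _ hv hae⟩
    · apply le_sInf
      rintro y ⟨A, hAsub, hAg, rfl⟩
      by_cases he : e₀ ∈ A
      · exact le_trans (min_le_left _ _)
          (Finset.single_le_sum (f := fun a => (c a : ℕ∞)) (fun i _ => zero_le) he)
      · refine le_trans (min_le_right _ _) (sInf_le ?_)
        refine ⟨A, fun a ha => ?_, ?_, rfl⟩
        · rcases Finset.mem_insert.mp (hAsub ha) with h | h
          · exact absurd (h ▸ ha) he
          · exact h
        · refine le_trans hAg ?_
          rw [hgain, hgain']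
          apply Finset.card_le_card
          intro x hx
          obtain ⟨hxS, hcut⟩ := Finset.mem_filter.mp hx
          refine Finset.mem_filter.mpr ⟨hxS, ?_, fun q =>
            cut_to_v_of_cut_to_w hT hadj (he₀ ▸ he) hcut q.1 q.2⟩
          rintro rfl
          obtain ⟨a, haA, hae⟩ := hcut (SimpleGraph.Path.singleton hadj)
          have ha : a = e₀ := by
            rw [he₀]
            simpa [SimpleGraph.Path.singleton] using hae
          exact he (ha ▸ haA)
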